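/- If A_1, …, A_h are r-element sets and B_1, …, B_h are s-element sets such that (a) A_i ∩ B_i = ∅ for every i = 1, …, h, and (b) A_i ∩ B_j ≠ ∅ whenever 1 ≤ i < j ≤ h, then h ≤ C(r+s, r), the binomial coefficient. (Skew version of Bollobás's set-pair theorem.) -/

import Mathlib

open Finset

/-- Triangular-evaluation linear independence. -/
lemma tri_li {V : Type*} [AddCommGroup V] [Module ℝ V] {n : ℕ}
    (v : Fin n → V) (φ : Fin n → (V →ₗ[ℝ] ℝ))
    (hdiag : ∀ i, φ i (v i) ≠ 0) (htri : ∀ i j, i < j → φ j (v i) = 0) :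
    LinearIndependent ℝ v := by
  rw [linearIndependent_iff']
  intro t lam hsum
  by_contra hc
  push_neg at hc
  obtain ⟨i0, hi0t, hi0⟩ := hc
  set S : Finset (Fin n) := t.filter (fun i => lam i ≠ 0) with hS
  have hSne : S.Nonempty := ⟨i0, by simp [hS, hi0t, hi0]⟩
  set j := S.max' hSne with hj
  have hjS : j ∈ S := S.max'_mem hSne
  have hjt : j ∈ t := (Finset.mem_filter.mp hjS).1
  have hjlam : lam j ≠ 0 := (Finset.mem_filter.mp hjS).2
  have := congrArg (φ j) hsum
  rw [map_sum, map_zero] at this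
  have hterms : ∀ i ∈ t, i ≠ j → φ j (lam i • v i) = 0 := by
    intro i hit hij
    rcases lt_or_gt_of_ne hij with hlt | hgt
    · rw [map_smul, htri i j hlt, smul_zero]
    · have : lam i = 0 := by
        by_contra hne
        have : i ∈ S := Finset.mem_filter.mpr ⟨hit, hne⟩
        exact absurd (S.le_max' i this) (not_le.mpr hgt)
      simp [this]
  rw [Finset.sum_eq_single j hterms (fun hj' => absurd hjt hj')] at this
  rw [map_smul, smul_eq_mul] at this
  exact hdiag j (by
    rcases mul_eq_zero.mp this with h' | h'
    · exact absurd h' hjlam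
    · exact absurd h' (fun _ => by simp_all))

/-- Number of monomial exponent vectors in `s` variables with total degree ≤ r. -/
lemma count_monomials (r s : ℕ) :
    (((Finset.range (r+1)).biUnion
      (fun n => (Finset.univ : Finset (Fin s)).finsuppAntidiag n)).card)
      ≤ Nat.choose (r + s) r := by
  classical
  set D := (Finset.range (r+1)).biUnion
      (fun n => (Finset.univ : Finset (Fin s)).finsuppAntidiag n) with hD
  have hmem : ∀ d ∈ D, ∑ i : Fin s, d i ≤ r := by
    intro d hd
    simp only [hD, Finset.mem_biUnion, Finset.mem_range, mem_finsuppAntidiag] at hd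
    obtain ⟨n, hn, hsum, -⟩ := hd
    have hsum' : (∑ i : Fin s, d i) = n := hsum
    omega
  -- injection into Sym (Fin (s+1)) r
  set F : (Fin s →₀ ℕ) → Multiset (Fin (s+1)) :=
    fun d => Multiset.replicate (r - ∑ i : Fin s, d i) (Fin.last s)
      + ∑ i : Fin s, Multiset.replicate (d i) (Fin.castSucc i) with hF
  have hcard : ∀ d ∈ D, Multiset.card (F d) = r := by
    intro d hd
    have h := hmem d hd
    simp only [hF, Multiset.card_add, Multiset.card_replicate]
    rw [Multiset.card_sum]
    simp only [Multiset.card_replicate]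
    omega
  have hcount : ∀ d, ∀ i : Fin s, Multiset.count (Fin.castSucc i) (F d) = d i := by
    intro d i
    simp only [hF, Multiset.count_add, Multiset.count_replicate, Multiset.count_sum']
    rw [if_neg ((Fin.ne_of_lt (Fin.castSucc_lt_last i)).symm), zero_add]
    rw [Finset.sum_eq_single i]
    · simp
    · intro b _ hbi
      rw [if_neg]
      intro hcs
      exact hbi (Fin.castSucc_injective _ hcs)
    · intro hi; exact absurd (Finset.mem_univ i) hi
  have inj : Set.InjOn (fun d => F d) D := by
    intro d1 h1 d2 h2 heq
    ext i
    have := congrArg (Multiset.count (Fin.castSucc i)) heq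
    rwa [hcount d1 i, hcount d2 i] at this
  set G : (Fin s →₀ ℕ) → Sym (Fin (s+1)) r := fun d =>
    if hd : Multiset.card (F d) = r then (⟨F d, hd⟩ : Sym (Fin (s+1)) r)
    else Sym.replicate r 0 with hG
  have key : D.card ≤ (Finset.univ : Finset (Sym (Fin (s+1)) r)).card := by
    apply Finset.card_le_card_of_injOn G
    · intro d _; exact Finset.mem_univ _
    · intro d1 h1 d2 h2 heq
      simp only [Finset.mem_coe] at h1 h2
      simp only [hG, dif_pos (hcard d1 h1), dif_pos (hcard d2 h2)] at heq
      exact inj h1 h2 (by simpa [hcard d1 h1, hcard d2 h2] using congrArg Subtype.val heq)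
  refine key.trans (le_of_eq ?_)
  rw [Finset.card_univ, Sym.card_sym_eq_choose]
  congr 1
  simp [Fintype.card_fin]
  omega

theorem skew_bollobas {α : Type*} [DecidableEq α] (h r s : ℕ)
    (A B : Fin h → Finset α)
    (hA : ∀ i, (A i).card = r) (hB : ∀ i, (B i).card = s)
    (hdisj : ∀ i, A i ∩ B i = ∅)
    (hskew : ∀ i j, i < j → (A i ∩ B j).Nonempty) :
    h ≤ Nat.choose (r + s) r := by
  classical
  -- distinct real labels for the relevant elements
  set U : Finset α := Finset.univ.biUnion (fun i : Fin h => A i ∪ B i) with hU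
  have hAU : ∀ i, ∀ x ∈ A i, x ∈ U := by
    intro i x hx
    simp only [hU, Finset.mem_biUnion]
    exact ⟨i, Finset.mem_univ i, Finset.mem_union_left _ hx⟩
  have hBU : ∀ i, ∀ x ∈ B i, x ∈ U := by
    intro i x hx
    simp only [hU, Finset.mem_biUnion]
    exact ⟨i, Finset.mem_univ i, Finset.mem_union_right _ hx⟩
  set c : α → ℝ := fun x => if hx : x ∈ U then ((U.equivFin ⟨x, hx⟩ : ℕ) : ℝ) else 0 with hc
  have hcinj : ∀ x ∈ U, ∀ y ∈ U, c x = c y → x = y := by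
    intro x hx y hy hxy
    simp only [hc, dif_pos hx, dif_pos hy, Nat.cast_inj] at hxy
    have := U.equivFin.injective (Fin.val_injective hxy)
    exact Subtype.ext_iff.mp this
  -- the univariate polynomials for the B's
  set q : Fin h → Polynomial ℝ := fun j => ∏ b ∈ B j, (Polynomial.X - Polynomial.C (c b)) with hq
  have hqmonic : ∀ j, (q j).Monic := fun j =>
    Polynomial.monic_prod_of_monic _ _ (fun b _ => Polynomial.monic_X_sub_C _)
  have hqdeg : ∀ j, (q j).natDegree = s := by
    intro j
    rw [hq]
    rw [Polynomial.natDegree_prod _ _ (fun b _ => Polynomial.X_sub_C_ne_zero _)]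
    simp [Polynomial.natDegree_X_sub_C, hB j]
  -- evaluation of q in terms of its s lowest coefficients
  have heval : ∀ j (t : ℝ), (q j).eval t = t ^ s + ∑ k : Fin s, (q j).coeff k * t ^ (k : ℕ) := by
    intro j t
    rw [Polynomial.eval_eq_sum_range, hqdeg j, Finset.sum_range_succ]
    have hcs : (q j).coeff s = 1 := by
      have := (hqmonic j).coeff_natDegree
      rwa [hqdeg j] at this
    rw [hcs, one_mul, Fin.sum_univ_eq_sum_range (fun k => (q j).coeff k * t ^ k) s]
    ring
  -- the multivariate polynomials for the A's
  set g : Fin h → MvPolynomial (Fin s) ℝ := fun i => ∏ a ∈ A i,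
      (MvPolynomial.C (c a ^ s) + ∑ k : Fin s, MvPolynomial.C (c a ^ (k : ℕ)) * MvPolynomial.X k)
    with hg
  set e : Fin h → (Fin s → ℝ) := fun j k => (q j).coeff k with he
  have hgeval : ∀ i j, MvPolynomial.eval (e j) (g i) = ∏ a ∈ A i, (q j).eval (c a) := by
    intro i j
    rw [hg]
    rw [map_prod]
    refine Finset.prod_congr rfl fun a _ => ?_
    rw [heval j (c a)]
    simp [he, mul_comm]
  -- triangular structure
  have htri : ∀ i j, i < j → MvPolynomial.eval (e j) (g i) = 0 := by
    intro i j hij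
    obtain ⟨a, ha⟩ := hskew i j hij
    rw [Finset.mem_inter] at ha
    rw [hgeval i j]
    apply Finset.prod_eq_zero ha.1
    rw [hq]
    rw [Polynomial.eval_prod]
    apply Finset.prod_eq_zero ha.2
    simp
  have hdiag : ∀ i, MvPolynomial.eval (e i) (g i) ≠ 0 := by
    intro i
    rw [hgeval i i]
    apply Finset.prod_ne_zero_iff.mpr
    intro a haA
    rw [hq, Polynomial.eval_prod]
    apply Finset.prod_ne_zero_iff.mpr
    intro b hbB
    simp only [Polynomial.eval_sub, Polynomial.eval_X, Polynomial.eval_C, sub_ne_zero]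
    intro hab
    have hane : a ≠ b := by
      intro hab'
      have : a ∈ A i ∩ B i := Finset.mem_inter.mpr ⟨haA, hab' ▸ hbB⟩
      rw [hdisj i] at this
      exact absurd this (Finset.notMem_empty a)
    exact hane (hcinj a (hAU i a haA) b (hBU i b hbB) hab)
  -- linear independence
  have hli : LinearIndependent ℝ g := by
    apply tri_li g (fun j => (MvPolynomial.aeval (e j)).toLinearMap)
    · intro i
      exact hdiag i
    · intro i j hij
      exact htri i j hij
  -- span of low-degree monomials
  set D := (Finset.range (r+1)).biUnion
      (fun n => (Finset.univ : Finset (Fin s)).finsuppAntidiag n) with hD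
  set w : Set (MvPolynomial (Fin s) ℝ) :=
    ↑(D.image fun d => (MvPolynomial.monomial d (1 : ℝ))) with hw
  have hgdeg : ∀ i, (g i).totalDegree ≤ r := by
    intro i
    rw [hg]
    refine le_trans (MvPolynomial.totalDegree_finset_prod _ _) ?_
    have hfac : ∀ a ∈ A i, (MvPolynomial.C (c a ^ s)
        + ∑ k : Fin s, MvPolynomial.C (c a ^ (k : ℕ)) * MvPolynomial.X k).totalDegree ≤ 1 := by
      intro a _
      apply le_trans (MvPolynomial.totalDegree_add _ _)
      apply max_le
      · simp only [MvPolynomial.totalDegree_C]; omega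
      · apply le_trans (MvPolynomial.totalDegree_finset_sum _ _)
        apply Finset.sup_le
        intro k _
        apply le_trans (MvPolynomial.totalDegree_mul _ _)
        simp only [MvPolynomial.totalDegree_C, MvPolynomial.totalDegree_X]
        omega
    refine le_trans (Finset.sum_le_sum hfac) ?_
    rw [Finset.sum_const, hA i, smul_eq_mul, mul_one]
  have hspan : Set.range g ≤ ↑(Submodule.span ℝ w) := by
    rintro _ ⟨i, rfl⟩
    rw [MvPolynomial.as_sum (g i)]
    apply Submodule.sum_mem
    intro d hd
    have hdD : d ∈ D := by
      simp only [hD, Finset.mem_biUnion, Finset.mem_range, Finset.mem_finsuppAntidiag]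
      refine ⟨∑ k : Fin s, d k, ?_, rfl, fun x _ => Finset.mem_univ x⟩
      have h1 : (d.sum fun _ n => n) ≤ (g i).totalDegree := MvPolynomial.le_totalDegree hd
      have h2 : (d.sum fun _ n => n) = ∑ k : Fin s, d k :=
        Finsupp.sum_fintype d _ (fun _ => rfl)
      have := hgdeg i
      omega
    have : MvPolynomial.monomial d (MvPolynomial.coeff d (g i))
        = (MvPolynomial.coeff d (g i)) • MvPolynomial.monomial d (1 : ℝ) := by
      rw [MvPolynomial.smul_monomial, smul_eq_mul, mul_one]
    rw [this]
    apply Submodule.smul_mem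
    apply Submodule.subset_span
    rw [hw]
    exact Finset.mem_coe.mpr (Finset.mem_image_of_mem _ hdD)
  have hcardw : Fintype.card w ≤ Nat.choose (r + s) r := by
    have hcw : Fintype.card w
        = (D.image fun d => (MvPolynomial.monomial d (1 : ℝ))).card := by
      simp only [hw, Finset.coe_sort_coe, Fintype.card_coe]
    rw [hcw]
    exact le_trans Finset.card_image_le (count_monomials r s)
  have := linearIndependent_le_span' g hli w hspan
  rw [Cardinal.mk_fin] at this
  have : h ≤ Fintype.card w := by exact_mod_cast this
  omega
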